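/- For 1 ≤ p < ∞ and nonzero complex numbers λ, ω, the operators λB_p and ωB_p on ℓ^p are topologically conjugate if and only if χ(|λ|) = χ(|ω|), where χ(t) = 1 if t > 1, 0 if t = 1, −1 if t < 1. -/

import Mathlib

set_option linter.unusedVariables false
set_option linter.unusedSectionVars false
set_option maxHeartbeats 1000000

open scoped ENNReal
open Filter Topology

namespace SC

variable {p : ℝ≥0∞} [hfact : Fact (1 ≤ p)]

lemma p_ne_zero : p ≠ 0 := (lt_of_lt_of_le zero_lt_one hfact.out).ne'

lemma pt_pos (hp : p ≠ ∞) : 0 < p.toReal :=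
  ENNReal.toReal_pos p_ne_zero hp

lemma pt_ne_zero (hp : p ≠ ∞) : p.toReal ≠ 0 := (pt_pos hp).ne'

lemma pt_one_le (hp : p ≠ ∞) : 1 ≤ p.toReal := by
  have := ENNReal.toReal_mono hp hfact.out
  simpa using this

/-- Summability of the `p`-th powers of norms of coordinates. -/
lemma summable_norm_rpow (hp : p ≠ ∞) (x : lp (fun _ : ℕ => ℂ) p) :
    Summable (fun n => ‖x n‖ ^ p.toReal) :=
  ((lp.hasSum_norm (pt_pos hp) x).summable)

lemma summable_tail (hp : p ≠ ∞) (x : lp (fun _ : ℕ => ℂ) p) (N : ℕ) :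
    Summable (fun k => ‖x (N + k)‖ ^ p.toReal) :=
  (summable_norm_rpow hp x).comp_injective (add_right_injective N)

/-- The tail sum `S x N = ∑_{k ≥ N} ‖x k‖^p`. -/
noncomputable def S (hp : p ≠ ∞) (x : lp (fun _ : ℕ => ℂ) p) (N : ℕ) : ℝ :=
  ∑' k, ‖x (N + k)‖ ^ p.toReal

lemma S_nonneg (hp : p ≠ ∞) (x : lp (fun _ : ℕ => ℂ) p) (N : ℕ) : 0 ≤ S hp x N :=
  tsum_nonneg (fun k => Real.rpow_nonneg (norm_nonneg _) _)

lemma S_succ (hp : p ≠ ∞) (x : lp (fun _ : ℕ => ℂ) p) (N : ℕ) :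
    S hp x N = ‖x N‖ ^ p.toReal + S hp x (N + 1) := by
  have h := Summable.tsum_eq_zero_add (f := fun k => ‖x (N + k)‖ ^ p.toReal) (summable_tail hp x N)
  simp only [Nat.add_zero] at h
  rw [S, h, S]
  congr 1
  exact tsum_congr fun k => by rw [show N + (k + 1) = (N + 1) + k by omega]

lemma S_anti (hp : p ≠ ∞) (x : lp (fun _ : ℕ => ℂ) p) (N : ℕ) :
    S hp x (N + 1) ≤ S hp x N := by
  rw [S_succ hp x N]
  have : (0:ℝ) ≤ ‖x N‖ ^ p.toReal := Real.rpow_nonneg (norm_nonneg _) _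
  linarith

lemma S_zero (hp : p ≠ ∞) (x : lp (fun _ : ℕ => ℂ) p) :
    S hp x 0 = ‖x‖ ^ p.toReal := by
  rw [lp.norm_rpow_eq_tsum (pt_pos hp) x, S]
  exact tsum_congr fun k => by rw [Nat.zero_add]

lemma S_tendsto (hp : p ≠ ∞) (x : lp (fun _ : ℕ => ℂ) p) :
    Tendsto (S hp x) atTop (𝓝 0) := by
  have h := tendsto_sum_nat_add (f := fun n => ‖x n‖ ^ p.toReal)
  convert h using 2 with N
  exact tsum_congr fun k => by rw [Nat.add_comm]


/-- telescoping sums of a nonneg antitone null sequence -/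
lemma hasSum_telescope {g : ℕ → ℝ} (hanti : ∀ n, g (n + 1) ≤ g n)
    (hlim : Tendsto g atTop (𝓝 0)) :
    HasSum (fun n => g n - g (n + 1)) (g 0) := by
  have hnn : ∀ n, 0 ≤ g n - g (n + 1) := fun n => sub_nonneg.2 (hanti n)
  rw [hasSum_iff_tendsto_nat_of_nonneg hnn]
  have : ∀ n, ∑ i ∈ Finset.range n, (g i - g (i + 1)) = g 0 - g n := by
    intro n; exact Finset.sum_range_sub' g n
  simp only [this]
  simpa using (tendsto_const_nhds (x := g 0)).sub hlim


local notation "E" => lp (fun _ : ℕ => ℂ) p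

/-- build an lp element from a summability certificate -/
noncomputable def mk (f : ℕ → ℂ) (hf : Summable (fun n => ‖f n‖ ^ p.toReal)) : lp (fun _ : ℕ => ℂ) p :=
  ⟨f, memℓp_gen hf⟩

@[simp] lemma mk_apply (f : ℕ → ℂ) (hf) (n : ℕ) : (mk (p := p) f hf) n = f n := rfl

lemma norm_rpow_eq (hp : p ≠ ∞) (x : lp (fun _ : ℕ => ℂ) p) :
    ‖x‖ ^ p.toReal = ∑' n, ‖x n‖ ^ p.toReal :=
  lp.norm_rpow_eq_tsum (ENNReal.toReal_pos ((lt_of_lt_of_le zero_lt_one hfact.out).ne') hp) x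

lemma norm_eq_rpow (hp : p ≠ ∞) (x : lp (fun _ : ℕ => ℂ) p) :
    ‖x‖ = (∑' n, ‖x n‖ ^ p.toReal) ^ p.toReal⁻¹ := by
  rw [← norm_rpow_eq hp x,
    Real.rpow_rpow_inv (norm_nonneg x) (ENNReal.toReal_pos ((lt_of_lt_of_le zero_lt_one hfact.out).ne') hp).ne']


/-- The "drop the first `N` coordinates" operator. -/
noncomputable def T (hp : p ≠ ∞) (N : ℕ) (x : lp (fun _ : ℕ => ℂ) p) : lp (fun _ : ℕ => ℂ) p :=
  mk (fun k => x (N + k)) (summable_tail hp x N)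

lemma S_eq_norm_T (hp : p ≠ ∞) (x : lp (fun _ : ℕ => ℂ) p) (N : ℕ) :
    S hp x N = ‖T hp N x‖ ^ p.toReal := by
  rw [norm_rpow_eq hp]; rfl

lemma norm_T (hp : p ≠ ∞) (x : lp (fun _ : ℕ => ℂ) p) (N : ℕ) :
    ‖T hp N x‖ = (S hp x N) ^ p.toReal⁻¹ := by
  rw [S_eq_norm_T hp x N, Real.rpow_rpow_inv (norm_nonneg _) (pt_ne_zero hp)]

lemma T_sub (hp : p ≠ ∞) (N : ℕ) (x y : lp (fun _ : ℕ => ℂ) p) :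
    T hp N (x - y) = T hp N x - T hp N y := by
  apply lp.ext
  funext k
  simp only [T, mk_apply, lp.coeFn_sub, Pi.sub_apply]

lemma S_le_S_zero (hp : p ≠ ∞) (x : lp (fun _ : ℕ => ℂ) p) (N : ℕ) :
    S hp x N ≤ S hp x 0 := by
  induction N with
  | zero => exact le_refl _
  | succ n ih => exact le_trans (S_anti hp x n) ih

lemma norm_T_le (hp : p ≠ ∞) (x : lp (fun _ : ℕ => ℂ) p) (N : ℕ) :
    ‖T hp N x‖ ≤ ‖x‖ := by
  have h0 : ‖T hp 0 x‖ = ‖x‖ := by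
    rw [norm_T hp x 0, S_zero hp x, Real.rpow_rpow_inv (norm_nonneg x) (pt_ne_zero hp)]
  rw [norm_T hp x N, ← h0, norm_T hp x 0]
  exact Real.rpow_le_rpow (S_nonneg hp x N) (S_le_S_zero hp x N) (by positivity)

/-- Minkowski-type estimate for tails. -/
lemma S_rpow_inv_sub_le (hp : p ≠ ∞) (x y : lp (fun _ : ℕ => ℂ) p) (N : ℕ) :
    (S hp (x - y) N) ^ p.toReal⁻¹ ≤ (S hp x N) ^ p.toReal⁻¹ + (S hp y N) ^ p.toReal⁻¹ := by
  rw [← norm_T hp, ← norm_T hp, ← norm_T hp, T_sub hp N x y]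
  exact norm_sub_le _ _

lemma S_rpow_inv_le (hp : p ≠ ∞) (x y : lp (fun _ : ℕ => ℂ) p) (N : ℕ) :
    (S hp x N) ^ p.toReal⁻¹ ≤ (S hp y N) ^ p.toReal⁻¹ + ‖x - y‖ := by
  have h1 : (S hp x N) ^ p.toReal⁻¹ ≤ (S hp y N) ^ p.toReal⁻¹ + (S hp (x-y) N) ^ p.toReal⁻¹ := by
    have := S_rpow_inv_sub_le hp y (y - x) N
    have heq : y - (y - x) = x := by abel
    rw [heq] at this
    have hsym : S hp (y - x) N = S hp (x - y) N := by
      unfold S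
      refine tsum_congr fun k => ?_
      have : ((y - x : lp (fun _ : ℕ => ℂ) p) (N + k)) = -((x - y : lp (fun _ : ℕ => ℂ) p) (N + k)) := by
        simp [lp.coeFn_sub]
      rw [this, norm_neg]
    rw [hsym] at this
    linarith
  have h2 : (S hp (x - y) N) ^ p.toReal⁻¹ ≤ ‖x - y‖ := by
    rw [← norm_T hp]; exact norm_T_le hp _ N
  linarith

/-- coordinates are 1-Lipschitz -/
lemma norm_apply_sub_le (hp : p ≠ ∞) (x y : lp (fun _ : ℕ => ℂ) p) (n : ℕ) :
    ‖x n - y n‖ ≤ ‖x - y‖ := by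
  have := lp.norm_apply_le_norm (p_ne_zero (p := p)) (x - y) n
  simpa [lp.coeFn_sub] using this

lemma continuous_S (hp : p ≠ ∞) (N : ℕ) :
    Continuous (fun x : lp (fun _ : ℕ => ℂ) p => S hp x N) := by
  have h1 : Continuous (fun x : lp (fun _ : ℕ => ℂ) p => ‖T hp N x‖) := by
    rw [Metric.continuous_iff]
    intro x ε hε
    refine ⟨ε, hε, fun y hy => ?_⟩
    have : ‖T hp N y - T hp N x‖ ≤ ‖y - x‖ := by
      rw [← T_sub hp N y x]; exact norm_T_le hp _ N
    calc dist ‖T hp N y‖ ‖T hp N x‖ ≤ ‖T hp N y - T hp N x‖ := abs_norm_sub_norm_le _ _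
      _ ≤ ‖y - x‖ := this
      _ < ε := by rwa [dist_eq_norm] at hy
  have h2 : ∀ x : lp (fun _ : ℕ => ℂ) p, S hp x N = ‖T hp N x‖ ^ p.toReal :=
    fun x => S_eq_norm_T hp x N
  simp only [h2]
  exact h1.rpow_const (fun x => Or.inr (pt_pos hp).le)

/-! ### The tail-norm power map -/

/-- The coordinate formula of the power map `H_α`. -/
noncomputable def Hseq (hp : p ≠ ∞) (α : ℝ) (x : lp (fun _ : ℕ => ℂ) p) : ℕ → ℂ :=
  fun n => x n *
    ((((S hp x n ^ α - S hp x (n + 1) ^ α) / ‖x n‖ ^ p.toReal) ^ p.toReal⁻¹ : ℝ) : ℂ)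

lemma Sdiff_nonneg (hp : p ≠ ∞) {α : ℝ} (hα : 0 < α) (x : lp (fun _ : ℕ => ℂ) p) (n : ℕ) :
    0 ≤ S hp x n ^ α - S hp x (n + 1) ^ α :=
  sub_nonneg.2 (Real.rpow_le_rpow (S_nonneg hp x (n+1)) (S_anti hp x n) hα.le)

lemma norm_Hseq_rpow (hp : p ≠ ∞) {α : ℝ} (hα : 0 < α) (x : lp (fun _ : ℕ => ℂ) p) (n : ℕ) :
    ‖Hseq hp α x n‖ ^ p.toReal = S hp x n ^ α - S hp x (n + 1) ^ α := by
  by_cases hxn : x n = 0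
  · have hS : S hp x n = S hp x (n+1) := by
      rw [S_succ hp x n, hxn]
      simp [Real.zero_rpow (pt_ne_zero hp)]
    simp [Hseq, hxn, hS, Real.zero_rpow (pt_ne_zero hp)]
  · have hB : (0:ℝ) < ‖x n‖ ^ p.toReal :=
      Real.rpow_pos_of_pos (norm_pos_iff.2 hxn) _
    have hD : (0:ℝ) ≤ (S hp x n ^ α - S hp x (n + 1) ^ α) / ‖x n‖ ^ p.toReal :=
      div_nonneg (Sdiff_nonneg hp hα x n) hB.le
    have : ‖Hseq hp α x n‖ = ‖x n‖ * ((S hp x n ^ α - S hp x (n + 1) ^ α) / ‖x n‖ ^ p.toReal) ^ p.toReal⁻¹ := by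
      rw [Hseq, norm_mul, Complex.norm_real, Real.norm_of_nonneg (Real.rpow_nonneg hD _)]
    rw [this, Real.mul_rpow (norm_nonneg _) (Real.rpow_nonneg hD _),
      Real.rpow_inv_rpow hD (pt_ne_zero hp), mul_div_cancel₀ _ hB.ne']

lemma norm_Hseq (hp : p ≠ ∞) {α : ℝ} (hα : 0 < α) (x : lp (fun _ : ℕ => ℂ) p) (n : ℕ) :
    ‖Hseq hp α x n‖ = (S hp x n ^ α - S hp x (n + 1) ^ α) ^ p.toReal⁻¹ := by
  rw [← norm_Hseq_rpow hp hα x n, Real.rpow_rpow_inv (norm_nonneg _) (pt_ne_zero hp)]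

lemma S_comp_tendsto (hp : p ≠ ∞) (x : lp (fun _ : ℕ => ℂ) p) (N : ℕ) :
    Tendsto (fun k => S hp x (N + k)) atTop (𝓝 0) := by
  have h2 : Tendsto (fun k : ℕ => N + k) atTop atTop := by
    have := tendsto_add_atTop_nat N
    simpa [Nat.add_comm] using this
  exact (S_tendsto hp x).comp h2

lemma hasSum_Hseq_tail (hp : p ≠ ∞) {α : ℝ} (hα : 0 < α) (x : lp (fun _ : ℕ => ℂ) p) (N : ℕ) :
    HasSum (fun k => ‖Hseq hp α x (N + k)‖ ^ p.toReal) ((S hp x N) ^ α) := by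
  have g_anti : ∀ k, (fun k => S hp x (N + k) ^ α) (k + 1) ≤ (fun k => S hp x (N + k) ^ α) k := by
    intro k
    have : N + (k + 1) = (N + k) + 1 := by omega
    simp only [this]
    exact Real.rpow_le_rpow (S_nonneg hp x _) (S_anti hp x _) hα.le
  have g_lim : Tendsto (fun k => S hp x (N + k) ^ α) atTop (𝓝 0) := by
    have := (S_comp_tendsto hp x N).rpow_const (p := α) (Or.inr hα.le)
    rwa [Real.zero_rpow hα.ne'] at this
  have h := hasSum_telescope g_anti g_lim
  have hfun : (fun k => (fun k => S hp x (N + k) ^ α) k - (fun k => S hp x (N + k) ^ α) (k + 1))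
      = fun k => ‖Hseq hp α x (N + k)‖ ^ p.toReal := by
    funext k
    have e : N + (k + 1) = (N + k) + 1 := by omega
    simp only [e, norm_Hseq_rpow hp hα x (N + k)]
  rw [hfun] at h
  simpa using h

lemma summable_Hseq (hp : p ≠ ∞) {α : ℝ} (hα : 0 < α) (x : lp (fun _ : ℕ => ℂ) p) :
    Summable (fun n => ‖Hseq hp α x n‖ ^ p.toReal) := by
  have h := (hasSum_Hseq_tail hp hα x 0).summable
  have : (fun k => ‖Hseq hp α x (0 + k)‖ ^ p.toReal) = fun n => ‖Hseq hp α x n‖ ^ p.toReal := by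
    funext k; rw [Nat.zero_add]
  rwa [this] at h

/-- The power map `H_α` on `ℓ^p`. -/
noncomputable def HE (hp : p ≠ ∞) {α : ℝ} (hα : 0 < α) (x : lp (fun _ : ℕ => ℂ) p) :
    lp (fun _ : ℕ => ℂ) p :=
  mk (Hseq hp α x) (summable_Hseq hp hα x)

@[simp] lemma HE_apply (hp : p ≠ ∞) {α : ℝ} (hα : 0 < α) (x : lp (fun _ : ℕ => ℂ) p) (n : ℕ) :
    (HE hp hα x) n = Hseq hp α x n := rfl

lemma S_HE (hp : p ≠ ∞) {α : ℝ} (hα : 0 < α) (x : lp (fun _ : ℕ => ℂ) p) (N : ℕ) :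
    S hp (HE hp hα x) N = (S hp x N) ^ α := by
  have h := (hasSum_Hseq_tail hp hα x N).tsum_eq
  rw [S]
  rw [← h]
  exact tsum_congr fun k => rfl

lemma HE_HE (hp : p ≠ ∞) {α : ℝ} (hα : 0 < α) (x : lp (fun _ : ℕ => ℂ) p) :
    HE hp (inv_pos.2 hα) (HE hp hα x) = x := by
  apply lp.ext
  funext n
  show Hseq hp α⁻¹ (HE hp hα x) n = x n
  by_cases hxn : x n = 0
  · simp [Hseq, HE_apply, hxn]
  · have hs0nn := S_nonneg hp x n
    have hs1nn := S_nonneg hp x (n + 1)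
    have hB : (0:ℝ) < ‖x n‖ ^ p.toReal := Real.rpow_pos_of_pos (norm_pos_iff.2 hxn) _
    have hBs : S hp x n - S hp x (n + 1) = ‖x n‖ ^ p.toReal := by
      rw [S_succ hp x n]; ring
    have hlt : S hp x (n + 1) < S hp x n := by
      rw [S_succ hp x n]; linarith
    have hA : (0:ℝ) < S hp x n ^ α - S hp x (n + 1) ^ α :=
      sub_pos.2 (Real.rpow_lt_rpow hs1nn hlt hα)
    have hBpos : (0:ℝ) < S hp x n - S hp x (n + 1) := by linarith
    rw [Hseq, S_HE hp hα x n, S_HE hp hα x (n + 1), HE_apply,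
      norm_Hseq_rpow hp hα x n,
      Real.rpow_rpow_inv hs0nn hα.ne', Real.rpow_rpow_inv hs1nn hα.ne',
      Hseq, ← hBs]
    have hkey : ((S hp x n ^ α - S hp x (n + 1) ^ α) / (S hp x n - S hp x (n + 1))) ^ p.toReal⁻¹ *
        ((S hp x n - S hp x (n + 1)) / (S hp x n ^ α - S hp x (n + 1) ^ α)) ^ p.toReal⁻¹ = 1 := by
      rw [← Real.mul_rpow (div_nonneg hA.le hBpos.le) (div_nonneg hBpos.le hA.le)]
      have : (S hp x n ^ α - S hp x (n + 1) ^ α) / (S hp x n - S hp x (n + 1)) *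
          ((S hp x n - S hp x (n + 1)) / (S hp x n ^ α - S hp x (n + 1) ^ α)) = 1 := by
        field_simp
      rw [this, Real.one_rpow]
    rw [mul_assoc, ← Complex.ofReal_mul, hkey, Complex.ofReal_one, mul_one]

/-! ### Interaction with the weighted backward shift -/

lemma S_Bl (hp : p ≠ ∞) {l : ℂ} {Bl : lp (fun _ : ℕ => ℂ) p → lp (fun _ : ℕ => ℂ) p}
    (hBl : ∀ (x : lp (fun _ : ℕ => ℂ) p) (n : ℕ), (Bl x : ℕ → ℂ) n = l * x (n + 1))
    (x : lp (fun _ : ℕ => ℂ) p) (N : ℕ) :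
    S hp (Bl x) N = ‖l‖ ^ p.toReal * S hp x (N + 1) := by
  rw [S, S, ← tsum_mul_left]
  refine tsum_congr fun k => ?_
  rw [hBl x (N + k), norm_mul,
    Real.mul_rpow (norm_nonneg l) (norm_nonneg _),
    show N + k + 1 = (N + 1) + k from by omega]

lemma Hseq_Bl (hp : p ≠ ∞) {α : ℝ} (hα : 0 < α) {l : ℂ} (hl : l ≠ 0)
    {Bl : lp (fun _ : ℕ => ℂ) p → lp (fun _ : ℕ => ℂ) p}
    (hBl : ∀ (x : lp (fun _ : ℕ => ℂ) p) (n : ℕ), (Bl x : ℕ → ℂ) n = l * x (n + 1))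
    (x : lp (fun _ : ℕ => ℂ) p) (n : ℕ) :
    Hseq hp α (Bl x) n = (l * ((‖l‖ ^ (α - 1) : ℝ) : ℂ)) * Hseq hp α x (n + 1) := by
  have ht : (0:ℝ) < ‖l‖ := norm_pos_iff.2 hl
  have hpt := pt_ne_zero (p := p) hp
  have hs1 := S_nonneg hp x (n + 1)
  have hs2 := S_nonneg hp x (n + 2)
  have hBnn : (0:ℝ) ≤ ‖x (n + 1)‖ ^ p.toReal := Real.rpow_nonneg (norm_nonneg _) _
  have hD : (0:ℝ) ≤ S hp x (n + 1) ^ α - S hp x (n + 2) ^ α := Sdiff_nonneg hp hα x (n + 1)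
  rw [Hseq, Hseq, hBl x n, S_Bl hp hBl x n, S_Bl hp hBl x (n + 1)]
  have hnorm : ‖l * x (n + 1)‖ ^ p.toReal = ‖l‖ ^ p.toReal * ‖x (n + 1)‖ ^ p.toReal := by
    rw [norm_mul, Real.mul_rpow (norm_nonneg l) (norm_nonneg _)]
  rw [hnorm]
  have hmulpow : ∀ s : ℝ, 0 ≤ s → (‖l‖ ^ p.toReal * s) ^ α = ‖l‖ ^ (p.toReal * α) * s ^ α := by
    intro s hs
    rw [Real.mul_rpow (Real.rpow_nonneg (norm_nonneg l) _) hs, ← Real.rpow_mul (norm_nonneg l)]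
  rw [hmulpow _ hs1, hmulpow _ hs2]
  have hratio :
      (‖l‖ ^ (p.toReal * α) * S hp x (n + 1) ^ α - ‖l‖ ^ (p.toReal * α) * S hp x (n + 2) ^ α) /
        (‖l‖ ^ p.toReal * ‖x (n + 1)‖ ^ p.toReal)
      = ‖l‖ ^ (p.toReal * α - p.toReal) *
          ((S hp x (n + 1) ^ α - S hp x (n + 2) ^ α) / ‖x (n + 1)‖ ^ p.toReal) := by
    rw [← mul_sub, mul_div_mul_comm, Real.rpow_sub ht, div_eq_mul_inv, div_eq_mul_inv]
  rw [hratio,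
    Real.mul_rpow (Real.rpow_nonneg (norm_nonneg l) _) (div_nonneg hD hBnn),
    ← Real.rpow_mul (norm_nonneg l)]
  have hexp : (p.toReal * α - p.toReal) * p.toReal⁻¹ = α - 1 := by
    field_simp
  rw [hexp]
  push_cast
  ring

/-! ### Unimodular diagonal multiplier -/

lemma summable_Mseq (hp : p ≠ ∞) {c : ℂ} (hc : ‖c‖ = 1) (x : lp (fun _ : ℕ => ℂ) p) :
    Summable (fun n => ‖c ^ n * x n‖ ^ p.toReal) := by
  have : (fun n => ‖c ^ n * x n‖ ^ p.toReal) = fun n => ‖x n‖ ^ p.toReal := by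
    funext n; rw [norm_mul, norm_pow, hc, one_pow, one_mul]
  rw [this]
  exact summable_norm_rpow hp x

/-- diagonal multiplier by powers of a unimodular constant -/
noncomputable def ME (hp : p ≠ ∞) {c : ℂ} (hc : ‖c‖ = 1) (x : lp (fun _ : ℕ => ℂ) p) :
    lp (fun _ : ℕ => ℂ) p :=
  mk (fun n => c ^ n * x n) (summable_Mseq hp hc x)

@[simp] lemma ME_apply (hp : p ≠ ∞) {c : ℂ} (hc : ‖c‖ = 1) (x : lp (fun _ : ℕ => ℂ) p) (n : ℕ) :
    (ME hp hc x) n = c ^ n * x n := rfl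

lemma ME_ME (hp : p ≠ ∞) {c d : ℂ} (hc : ‖c‖ = 1) (hd : ‖d‖ = 1) (hcd : ‖c * d‖ = 1)
    (x : lp (fun _ : ℕ => ℂ) p) :
    ME hp hc (ME hp hd x) = ME hp hcd x := by
  apply lp.ext; funext n
  show c ^ n * (d ^ n * x n) = (c * d) ^ n * x n
  rw [mul_pow]; ring

lemma ME_one (hp : p ≠ ∞) (h1 : ‖(1:ℂ)‖ = 1) (x : lp (fun _ : ℕ => ℂ) p) :
    ME hp h1 x = x := by
  apply lp.ext; funext n
  show (1:ℂ) ^ n * x n = x n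
  rw [one_pow, one_mul]

lemma norm_ME_sub (hp : p ≠ ∞) {c : ℂ} (hc : ‖c‖ = 1) (x y : lp (fun _ : ℕ => ℂ) p) :
    ‖ME hp hc x - ME hp hc y‖ = ‖x - y‖ := by
  rw [norm_eq_rpow hp, norm_eq_rpow hp]
  congr 1
  refine tsum_congr fun n => ?_
  congr 1
  have h1 : (ME hp hc x - ME hp hc y : lp (fun _ : ℕ => ℂ) p) n = c ^ n * (x n - y n) := by
    simp [lp.coeFn_sub, ME_apply]; ring
  have h2 : (x - y : lp (fun _ : ℕ => ℂ) p) n = x n - y n := by simp [lp.coeFn_sub]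
  rw [h1, h2, norm_mul, norm_pow, hc, one_pow, one_mul]

lemma continuous_ME (hp : p ≠ ∞) {c : ℂ} (hc : ‖c‖ = 1) :
    Continuous (fun x : lp (fun _ : ℕ => ℂ) p => ME hp hc x) := by
  rw [Metric.continuous_iff]
  intro x ε hε
  exact ⟨ε, hε, fun y hy => by
    rwa [dist_eq_norm, norm_ME_sub hp hc] at *⟩

/-! ### concrete weighted backward shift -/

lemma summable_shift (hp : p ≠ ∞) (μ : ℂ) (x : lp (fun _ : ℕ => ℂ) p) :
    Summable (fun n => ‖μ * x (n + 1)‖ ^ p.toReal) := by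
  have h := (summable_tail hp x 1).mul_left (‖μ‖ ^ p.toReal)
  have : (fun n => ‖μ * x (n + 1)‖ ^ p.toReal)
      = fun n => ‖μ‖ ^ p.toReal * ‖x (1 + n)‖ ^ p.toReal := by
    funext n
    rw [norm_mul, Real.mul_rpow (norm_nonneg _) (norm_nonneg _), Nat.add_comm n 1]
  rw [this]
  exact h

/-- concrete weighted backward shift -/
noncomputable def shift (hp : p ≠ ∞) (μ : ℂ) (x : lp (fun _ : ℕ => ℂ) p) :
    lp (fun _ : ℕ => ℂ) p :=
  mk (fun n => μ * x (n + 1)) (summable_shift hp μ x)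

lemma shift_apply (hp : p ≠ ∞) (μ : ℂ) (x : lp (fun _ : ℕ => ℂ) p) (n : ℕ) :
    (shift hp μ x : ℕ → ℂ) n = μ * x (n + 1) := rfl

/-! ### Continuity of the power map -/

lemma continuous_coord (hp : p ≠ ∞) (m : ℕ) :
    Continuous (fun y : lp (fun _ : ℕ => ℂ) p => (y : ℕ → ℂ) m) := by
  rw [Metric.continuous_iff]
  intro z ε hε
  refine ⟨ε, hε, fun y hy => ?_⟩
  rw [dist_eq_norm] at *
  exact lt_of_le_of_lt (norm_apply_sub_le hp y z m) hy

lemma continuous_Sdiff (hp : p ≠ ∞) {α : ℝ} (hα : 0 < α) (n : ℕ) :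
    Continuous (fun y : lp (fun _ : ℕ => ℂ) p => S hp y n ^ α - S hp y (n + 1) ^ α) :=
  ((continuous_S hp n).rpow_const (fun _ => Or.inr hα.le)).sub
    ((continuous_S hp (n + 1)).rpow_const (fun _ => Or.inr hα.le))

lemma continuousAt_Hseq_coord (hp : p ≠ ∞) {α : ℝ} (hα : 0 < α)
    (x : lp (fun _ : ℕ => ℂ) p) (n : ℕ) :
    ContinuousAt (fun y => Hseq hp α y n) x := by
  by_cases hxn : x n = 0
  · rw [ContinuousAt]
    have hval : Hseq hp α x n = 0 := by simp [Hseq, hxn]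
    rw [hval, tendsto_zero_iff_norm_tendsto_zero]
    have hnorm : (fun y : lp (fun _ : ℕ => ℂ) p => ‖Hseq hp α y n‖)
        = fun y => (S hp y n ^ α - S hp y (n + 1) ^ α) ^ p.toReal⁻¹ := by
      funext y; exact norm_Hseq hp hα y n
    rw [hnorm]
    have hS0 : S hp x n ^ α - S hp x (n + 1) ^ α = 0 := by
      have : S hp x n = S hp x (n + 1) := by
        rw [S_succ hp x n, hxn]; simp [Real.zero_rpow (pt_ne_zero hp)]
      rw [this]; ring
    have hcont : ContinuousAt
        (fun y : lp (fun _ : ℕ => ℂ) p => (S hp y n ^ α - S hp y (n + 1) ^ α) ^ p.toReal⁻¹) x := by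
      apply ContinuousAt.rpow_const (continuous_Sdiff hp hα n).continuousAt
      right
      positivity
    have h2 := hcont.tendsto
    rw [hS0, Real.zero_rpow (inv_ne_zero (pt_ne_zero hp))] at h2
    exact h2
  · have hden : ContinuousAt (fun y : lp (fun _ : ℕ => ℂ) p => ‖(y : ℕ → ℂ) n‖ ^ p.toReal) x :=
      (((continuous_coord hp n).norm).rpow_const (fun _ => Or.inr (pt_pos hp).le)).continuousAt
    have hdne : ‖x n‖ ^ p.toReal ≠ 0 := (Real.rpow_pos_of_pos (norm_pos_iff.2 hxn) _).ne'
    have hratio : ContinuousAt (fun y : lp (fun _ : ℕ => ℂ) p =>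
        ((S hp y n ^ α - S hp y (n + 1) ^ α) / ‖(y : ℕ → ℂ) n‖ ^ p.toReal) ^ p.toReal⁻¹) x := by
      apply ContinuousAt.rpow_const
      · exact ((continuous_Sdiff hp hα n).continuousAt).div hden hdne
      · right; positivity
    have hcast : ContinuousAt (fun y : lp (fun _ : ℕ => ℂ) p =>
        ((((S hp y n ^ α - S hp y (n + 1) ^ α) / ‖(y : ℕ → ℂ) n‖ ^ p.toReal) ^ p.toReal⁻¹ : ℝ) : ℂ)) x :=
      Complex.continuous_ofReal.continuousAt.comp hratio
    exact ((continuous_coord hp n).continuousAt).mul hcast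

lemma rpow_swap {s : ℝ} (hs : 0 ≤ s) (a b : ℝ) : (s ^ a) ^ b = (s ^ b) ^ a := by
  rw [← Real.rpow_mul hs, ← Real.rpow_mul hs, mul_comm]

lemma continuous_HE (hp : p ≠ ∞) {α : ℝ} (hα : 0 < α) :
    Continuous (fun x : lp (fun _ : ℕ => ℂ) p => HE hp hα x) := by
  have hpt := pt_pos (p := p) hp
  rw [Metric.continuous_iff]
  intro x ε hε
  have he1 : (0:ℝ) < ε ^ p.toReal / 2 := by positivity
  set e1 := ε ^ p.toReal / 2 with he1def
  have hθ : (0:ℝ) < e1 ^ p.toReal⁻¹ / 2 := by positivity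
  set θ := e1 ^ p.toReal⁻¹ / 2 with hθdef
  have hδ₀ : (0:ℝ) < θ ^ α⁻¹ / 2 := by positivity
  set δ₀ := θ ^ α⁻¹ / 2 with hδ₀def
  obtain ⟨N, hN⟩ := ((S_tendsto hp x).eventually_lt_const
    (show (0:ℝ) < δ₀ ^ p.toReal by positivity)).exists
  -- the finite part functional
  set F := fun y : lp (fun _ : ℕ => ℂ) p =>
    ∑ n ∈ Finset.range N, ‖Hseq hp α y n - Hseq hp α x n‖ ^ p.toReal with hFdef
  have hFcont : ContinuousAt F x := by
    refine tendsto_finset_sum _ fun n _ => ?_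
    exact (((continuousAt_Hseq_coord hp hα x n).sub continuousAt_const).norm).rpow_const
      (Or.inr hpt.le)
  have hFx : F x = 0 := by
    rw [hFdef]
    refine Finset.sum_eq_zero fun n _ => ?_
    simp [Real.zero_rpow (pt_ne_zero hp)]
  have hev : ∀ᶠ y in nhds x, F y < e1 := by
    have := hFcont.tendsto
    rw [hFx] at this
    exact this.eventually_lt_const he1
  obtain ⟨δ₁, hδ₁, hball⟩ := Metric.eventually_nhds_iff_ball.1 hev
  refine ⟨min δ₁ δ₀, lt_min hδ₁ hδ₀, fun y hy => ?_⟩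
  have hyδ₁ : dist y x < δ₁ := lt_of_lt_of_le hy (min_le_left _ _)
  have hyδ₀ : ‖y - x‖ < δ₀ := by
    rw [← dist_eq_norm]; exact lt_of_lt_of_le hy (min_le_right _ _)
  have hFy : F y < e1 := hball y (Metric.mem_ball.2 hyδ₁)
  -- split the distance
  have hcoords : ∀ n : ℕ, ((HE hp hα y - HE hp hα x : lp (fun _ : ℕ => ℂ) p) : ℕ → ℂ) n
      = Hseq hp α y n - Hseq hp α x n := by
    intro n; simp [lp.coeFn_sub, HE_apply]
  have hsplit : dist (HE hp hα y) (HE hp hα x) ^ p.toReal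
      = F y + S hp (HE hp hα y - HE hp hα x) N := by
    rw [dist_eq_norm, norm_rpow_eq hp]
    rw [← Summable.sum_add_tsum_nat_add N (summable_norm_rpow hp (HE hp hα y - HE hp hα x))]
    have h2 : ∑' (i : ℕ), ‖((HE hp hα y - HE hp hα x : lp (fun _ : ℕ => ℂ) p) : ℕ → ℂ) (i + N)‖ ^ p.toReal
        = S hp (HE hp hα y - HE hp hα x) N := by
      rw [S]
      exact tsum_congr fun k => by rw [Nat.add_comm]
    have h1 : ∑ i ∈ Finset.range N, ‖((HE hp hα y - HE hp hα x : lp (fun _ : ℕ => ℂ) p) : ℕ → ℂ) i‖ ^ p.toReal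
        = F y := by
      rw [hFdef]
      exact Finset.sum_congr rfl fun n _ => by rw [hcoords n]
    rw [h1, h2]
  -- tail estimate
  have hSxN : (S hp x N) ^ p.toReal⁻¹ ≤ δ₀ := by
    calc (S hp x N) ^ p.toReal⁻¹ ≤ (δ₀ ^ p.toReal) ^ p.toReal⁻¹ :=
          Real.rpow_le_rpow (S_nonneg hp x N) hN.le (by positivity)
      _ = δ₀ := Real.rpow_rpow_inv hδ₀.le (pt_ne_zero hp)
  have hSyN : (S hp y N) ^ p.toReal⁻¹ ≤ 2 * δ₀ := by
    have := S_rpow_inv_le hp y x N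
    linarith
  have hTy : ‖T hp N (HE hp hα y)‖ ≤ (2 * δ₀) ^ α := by
    rw [norm_T hp, S_HE hp hα, rpow_swap (S_nonneg hp y N)]
    exact Real.rpow_le_rpow (Real.rpow_nonneg (S_nonneg hp y N) _) hSyN hα.le
  have hTx : ‖T hp N (HE hp hα x)‖ ≤ (2 * δ₀) ^ α := by
    rw [norm_T hp, S_HE hp hα, rpow_swap (S_nonneg hp x N)]
    refine le_trans (Real.rpow_le_rpow (Real.rpow_nonneg (S_nonneg hp x N) _) hSxN hα.le) ?_
    exact Real.rpow_le_rpow hδ₀.le (by linarith) hα.le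
  have h2δα : (2 * δ₀) ^ α = θ := by
    have : 2 * δ₀ = θ ^ α⁻¹ := by rw [hδ₀def]; ring
    rw [this, Real.rpow_inv_rpow hθ.le hα.ne']
  have htail : S hp (HE hp hα y - HE hp hα x) N ≤ e1 := by
    rw [S_eq_norm_T hp, T_sub hp]
    calc ‖T hp N (HE hp hα y) - T hp N (HE hp hα x)‖ ^ p.toReal
        ≤ (‖T hp N (HE hp hα y)‖ + ‖T hp N (HE hp hα x)‖) ^ p.toReal :=
          Real.rpow_le_rpow (norm_nonneg _) (norm_sub_le _ _) hpt.le
      _ ≤ ((2 * δ₀) ^ α + (2 * δ₀) ^ α) ^ p.toReal := by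
          apply Real.rpow_le_rpow (by positivity) (by linarith) hpt.le
      _ = (2 * θ) ^ p.toReal := by rw [h2δα]; ring_nf
      _ = (e1 ^ p.toReal⁻¹) ^ p.toReal := by rw [hθdef]; ring_nf
      _ = e1 := Real.rpow_inv_rpow he1.le (pt_ne_zero hp)
  -- conclude
  have hlt : dist (HE hp hα y) (HE hp hα x) ^ p.toReal < ε ^ p.toReal := by
    rw [hsplit, he1def] at *
    linarith
  by_contra hcon
  push_neg at hcon
  exact absurd (Real.rpow_le_rpow hε.le hcon hpt.le) (not_le.2 hlt)

lemma ME_inv_left (hp : p ≠ ∞) {c : ℂ} (hc0 : c ≠ 0) (hc : ‖c‖ = 1) (hcinv : ‖c⁻¹‖ = 1)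
    (x : lp (fun _ : ℕ => ℂ) p) :
    ME hp hcinv (ME hp hc x) = x := by
  apply lp.ext; funext n
  show (c⁻¹) ^ n * (c ^ n * x n) = x n
  rw [inv_pow, ← mul_assoc, inv_mul_cancel₀ (pow_ne_zero n hc0), one_mul]

lemma ME_inv_right (hp : p ≠ ∞) {c : ℂ} (hc0 : c ≠ 0) (hc : ‖c‖ = 1) (hcinv : ‖c⁻¹‖ = 1)
    (x : lp (fun _ : ℕ => ℂ) p) :
    ME hp hc (ME hp hcinv x) = x := by
  apply lp.ext; funext n
  show c ^ n * ((c⁻¹) ^ n * x n) = x n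
  rw [inv_pow, ← mul_assoc, mul_inv_cancel₀ (pow_ne_zero n hc0), one_mul]

lemma HE_HE' (hp : p ≠ ∞) {α : ℝ} (hα : 0 < α) (x : lp (fun _ : ℕ => ℂ) p) :
    HE hp hα (HE hp (inv_pos.2 hα) x) = x := by
  have h := HE_HE hp (inv_pos.2 hα) x
  simp only [inv_inv] at h
  exact h

/-- Main construction: if `‖l‖ ^ α = ‖w‖` for some `α > 0`, the shifts are conjugate. -/
lemma exists_conj (hp : p ≠ ∞) {l w : ℂ} (hl : l ≠ 0) (hw : w ≠ 0)
    {α : ℝ} (hα : 0 < α) (hlw : ‖l‖ ^ α = ‖w‖)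
    {Bl Bw : lp (fun _ : ℕ => ℂ) p → lp (fun _ : ℕ => ℂ) p}
    (hBl : ∀ (x : lp (fun _ : ℕ => ℂ) p) (n : ℕ), (Bl x : ℕ → ℂ) n = l * x (n + 1))
    (hBw : ∀ (x : lp (fun _ : ℕ => ℂ) p) (n : ℕ), (Bw x : ℕ → ℂ) n = w * x (n + 1)) :
    ∃ h : lp (fun _ : ℕ => ℂ) p ≃ₜ lp (fun _ : ℕ => ℂ) p, ∀ x, h (Bl x) = Bw (h x) := by
  have hlpos : (0:ℝ) < ‖l‖ := norm_pos_iff.2 hl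
  set μ : ℂ := l * ((‖l‖ ^ (α - 1) : ℝ) : ℂ) with hμ
  have hnormμ : ‖μ‖ = ‖w‖ := by
    rw [hμ, norm_mul, Complex.norm_real,
      Real.norm_of_nonneg (Real.rpow_nonneg (norm_nonneg l) _), ← hlw]
    nth_rewrite 1 [← Real.rpow_one ‖l‖]
    rw [← Real.rpow_add hlpos]
    ring_nf
  set c : ℂ := μ / w with hc
  have hc0 : c ≠ 0 := by
    rw [hc]
    exact div_ne_zero (by rw [hμ]; exact mul_ne_zero hl (by
      simp only [ne_eq, Complex.ofReal_eq_zero]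
      exact (Real.rpow_pos_of_pos hlpos _).ne')) hw
  have hcnorm : ‖c‖ = 1 := by
    rw [hc, norm_div, hnormμ, div_self (norm_ne_zero_iff.2 hw)]
  have hcinvnorm : ‖c⁻¹‖ = 1 := by rw [norm_inv, hcnorm]; norm_num
  have hwc : w * c = μ := by
    rw [hc]; field_simp
  refine ⟨Homeomorph.mk
    ⟨fun x => ME hp hcnorm (HE hp hα x),
     fun y => HE hp (inv_pos.2 hα) (ME hp hcinvnorm y),
     fun x => by
       show HE hp (inv_pos.2 hα) (ME hp hcinvnorm (ME hp hcnorm (HE hp hα x))) = x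
       rw [ME_inv_left hp hc0 hcnorm hcinvnorm, HE_HE hp hα],
     fun y => by
       show ME hp hcnorm (HE hp hα (HE hp (inv_pos.2 hα) (ME hp hcinvnorm y))) = y
       rw [HE_HE' hp hα, ME_inv_right hp hc0 hcnorm hcinvnorm]⟩
    ((continuous_ME hp hcnorm).comp (continuous_HE hp hα))
    ((continuous_HE hp (inv_pos.2 hα)).comp (continuous_ME hp hcinvnorm)), ?_⟩
  intro x
  apply lp.ext; funext n
  show c ^ n * (HE hp hα (Bl x)) n = (Bw (ME hp hcnorm (HE hp hα x)) : ℕ → ℂ) n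
  rw [hBw, HE_apply, Hseq_Bl hp hα hl hBl x n, ME_apply, HE_apply, ← hμ, ← hwc]
  ring

/-! ### Forward direction: invariants -/

lemma Bl_zero (hp : p ≠ ∞) {l : ℂ} {Bl : lp (fun _ : ℕ => ℂ) p → lp (fun _ : ℕ => ℂ) p}
    (hBl : ∀ (x : lp (fun _ : ℕ => ℂ) p) (n : ℕ), (Bl x : ℕ → ℂ) n = l * x (n + 1)) :
    Bl 0 = 0 := by
  apply lp.ext; funext n
  rw [hBl 0 n]
  simp [lp.coeFn_zero]

/-- For `‖l‖ > 1` there is a nonzero fixed point. -/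
lemma exists_fixed (hp : p ≠ ∞) {l : ℂ} (hl : 1 < ‖l‖)
    {Bl : lp (fun _ : ℕ => ℂ) p → lp (fun _ : ℕ => ℂ) p}
    (hBl : ∀ (x : lp (fun _ : ℕ => ℂ) p) (n : ℕ), (Bl x : ℕ → ℂ) n = l * x (n + 1)) :
    ∃ x : lp (fun _ : ℕ => ℂ) p, Bl x = x ∧ x ≠ 0 := by
  have hl0 : l ≠ 0 := by
    intro h; rw [h] at hl; simp at hl; linarith
  have hr : (0:ℝ) ≤ ‖l‖⁻¹ := by positivity
  have hrlt : ‖l‖⁻¹ < 1 := by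
    rw [inv_lt_one_iff₀]; right; exact hl
  have hsum : Summable (fun n : ℕ => ‖(l⁻¹) ^ n‖ ^ p.toReal) := by
    have hfun : (fun n : ℕ => ‖(l⁻¹) ^ n‖ ^ p.toReal) = fun n : ℕ => ((‖l‖⁻¹) ^ p.toReal) ^ n := by
      funext n
      rw [norm_pow, norm_inv, ← Real.rpow_natCast (‖l‖⁻¹) n, ← Real.rpow_mul hr,
        mul_comm, Real.rpow_mul hr, Real.rpow_natCast]
    rw [hfun]
    refine summable_geometric_of_lt_one (by positivity) ?_
    exact Real.rpow_lt_one hr hrlt (pt_pos hp)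
  refine ⟨mk (fun n => (l⁻¹) ^ n) hsum, ?_, ?_⟩
  · apply lp.ext; funext n
    rw [hBl _ n]
    show l * (l⁻¹) ^ (n + 1) = (l⁻¹) ^ n
    rw [pow_succ]
    field_simp
  · intro h
    have h0 : (mk (p := p) (fun n => (l⁻¹) ^ n) hsum) 0 = (0 : lp (fun _ : ℕ => ℂ) p) 0 := by
      rw [h]
    rw [mk_apply, lp.coeFn_zero] at h0
    simp at h0

/-- For `‖l‖ ≤ 1` the only fixed point is `0`. -/
lemma fixed_unique (hp : p ≠ ∞) {l : ℂ} (hl : ‖l‖ ≤ 1)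
    {Bl : lp (fun _ : ℕ => ℂ) p → lp (fun _ : ℕ => ℂ) p}
    (hBl : ∀ (x : lp (fun _ : ℕ => ℂ) p) (n : ℕ), (Bl x : ℕ → ℂ) n = l * x (n + 1))
    {x : lp (fun _ : ℕ => ℂ) p} (hx : Bl x = x) : x = 0 := by
  have hcoord : ∀ n, x n = l * x (n + 1) := by
    intro n
    conv_lhs => rw [← hx]
    exact hBl x n
  have hmono : ∀ n m, n ≤ m → ‖x n‖ ≤ ‖x m‖ := by
    intro n m hnm
    induction m with
    | zero =>
      have : n = 0 := by omega
      rw [this]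
    | succ k ih =>
      rcases Nat.lt_or_ge n (k+1) with hlt | hge
      · have h1 : ‖x k‖ ≤ ‖x (k+1)‖ := by
          rw [hcoord k, norm_mul]
          calc ‖l‖ * ‖x (k+1)‖ ≤ 1 * ‖x (k+1)‖ := by
                exact mul_le_mul_of_nonneg_right hl (norm_nonneg _)
            _ = ‖x (k+1)‖ := one_mul _
        exact le_trans (ih (by omega)) h1
      · have : n = k + 1 := by omega
        rw [this]
  have hto : Tendsto (fun m => ‖x m‖) atTop (𝓝 0) := by
    have h1 : Tendsto (fun m => ‖x m‖ ^ p.toReal) atTop (𝓝 0) :=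
      (summable_norm_rpow hp x).tendsto_atTop_zero
    have h2 := h1.rpow_const (p := p.toReal⁻¹) (Or.inr (by positivity))
    rw [Real.zero_rpow (inv_ne_zero (pt_ne_zero hp))] at h2
    have hfun : (fun m => (‖x m‖ ^ p.toReal) ^ p.toReal⁻¹) = fun m => ‖x m‖ := by
      funext m; exact Real.rpow_rpow_inv (norm_nonneg _) (pt_ne_zero hp)
    rwa [hfun] at h2
  apply lp.ext; funext n
  rw [lp.coeFn_zero]
  have hle : ∀ m, n ≤ m → ‖x n‖ ≤ ‖x m‖ := fun m h => hmono n m h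
  have : ‖x n‖ ≤ 0 := by
    refine ge_of_tendsto hto ?_
    filter_upwards [eventually_ge_atTop n] with m hm
    exact hle m hm
  have := le_antisymm this (norm_nonneg _)
  rwa [norm_eq_zero] at this

lemma iterate_coords (hp : p ≠ ∞) {l : ℂ}
    {Bl : lp (fun _ : ℕ => ℂ) p → lp (fun _ : ℕ => ℂ) p}
    (hBl : ∀ (x : lp (fun _ : ℕ => ℂ) p) (n : ℕ), (Bl x : ℕ → ℂ) n = l * x (n + 1))
    (k : ℕ) (x : lp (fun _ : ℕ => ℂ) p) (m : ℕ) :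
    (Bl^[k] x : ℕ → ℂ) m = l ^ k * x (m + k) := by
  induction k generalizing x m with
  | zero => simp
  | succ j ih =>
    rw [Function.iterate_succ_apply, ih (Bl x) m, hBl x (m + j),
      show m + j + 1 = m + (j + 1) from by omega, pow_succ]
    ring

lemma norm_Bl_le (hp : p ≠ ∞) {l : ℂ}
    {Bl : lp (fun _ : ℕ => ℂ) p → lp (fun _ : ℕ => ℂ) p}
    (hBl : ∀ (x : lp (fun _ : ℕ => ℂ) p) (n : ℕ), (Bl x : ℕ → ℂ) n = l * x (n + 1))
    (x : lp (fun _ : ℕ => ℂ) p) : ‖Bl x‖ ≤ ‖l‖ * ‖x‖ := by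
  have h1 : ‖Bl x‖ ^ p.toReal = ‖l‖ ^ p.toReal * S hp x 1 := by
    rw [← S_zero hp (Bl x), S_Bl hp hBl x 0]
  have h2 : S hp x 1 ≤ ‖x‖ ^ p.toReal := by
    rw [← S_zero hp x]
    exact S_le_S_zero hp x 1
  have h3 : ‖Bl x‖ ^ p.toReal ≤ (‖l‖ * ‖x‖) ^ p.toReal := by
    rw [h1, Real.mul_rpow (norm_nonneg l) (norm_nonneg x)]
    exact mul_le_mul_of_nonneg_left h2 (Real.rpow_nonneg (norm_nonneg l) _)
  calc ‖Bl x‖ = (‖Bl x‖ ^ p.toReal) ^ p.toReal⁻¹ :=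
        (Real.rpow_rpow_inv (norm_nonneg _) (pt_ne_zero hp)).symm
    _ ≤ ((‖l‖ * ‖x‖) ^ p.toReal) ^ p.toReal⁻¹ :=
        Real.rpow_le_rpow (by positivity) h3 (by positivity)
    _ = ‖l‖ * ‖x‖ := Real.rpow_rpow_inv (by positivity) (pt_ne_zero hp)

lemma norm_iterate_le (hp : p ≠ ∞) {l : ℂ}
    {Bl : lp (fun _ : ℕ => ℂ) p → lp (fun _ : ℕ => ℂ) p}
    (hBl : ∀ (x : lp (fun _ : ℕ => ℂ) p) (n : ℕ), (Bl x : ℕ → ℂ) n = l * x (n + 1))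
    (k : ℕ) (x : lp (fun _ : ℕ => ℂ) p) : ‖Bl^[k] x‖ ≤ ‖l‖ ^ k * ‖x‖ := by
  induction k with
  | zero => simp
  | succ j ih =>
    rw [Function.iterate_succ_apply']
    calc ‖Bl (Bl^[j] x)‖ ≤ ‖l‖ * ‖Bl^[j] x‖ := norm_Bl_le hp hBl _
      _ ≤ ‖l‖ * (‖l‖ ^ j * ‖x‖) := by
          exact mul_le_mul_of_nonneg_left ih (norm_nonneg l)
      _ = ‖l‖ ^ (j + 1) * ‖x‖ := by ring

/-- uniform attraction at `0` (a topological-conjugacy invariant given `h 0 = 0`) -/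
def UA (f : lp (fun _ : ℕ => ℂ) p → lp (fun _ : ℕ => ℂ) p) : Prop :=
  ∃ δ > (0:ℝ), ∀ ε > (0:ℝ), ∃ N : ℕ, ∀ n ≥ N, ∀ x : lp (fun _ : ℕ => ℂ) p,
    ‖x‖ < δ → ‖f^[n] x‖ < ε

lemma UA_of_lt (hp : p ≠ ∞) {l : ℂ} (hl : ‖l‖ < 1)
    {Bl : lp (fun _ : ℕ => ℂ) p → lp (fun _ : ℕ => ℂ) p}
    (hBl : ∀ (x : lp (fun _ : ℕ => ℂ) p) (n : ℕ), (Bl x : ℕ → ℂ) n = l * x (n + 1)) :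
    UA Bl := by
  refine ⟨1, one_pos, fun ε hε => ?_⟩
  have htend : Tendsto (fun n : ℕ => ‖l‖ ^ n) atTop (𝓝 0) :=
    tendsto_pow_atTop_nhds_zero_of_lt_one (norm_nonneg l) hl
  obtain ⟨N, hN⟩ := (htend.eventually_lt_const hε).exists_forall_of_atTop
  refine ⟨N, fun n hn x hx => ?_⟩
  calc ‖Bl^[n] x‖ ≤ ‖l‖ ^ n * ‖x‖ := norm_iterate_le hp hBl n x
    _ ≤ ‖l‖ ^ n * 1 := by
        exact mul_le_mul_of_nonneg_left hx.le (by positivity)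
    _ = ‖l‖ ^ n := mul_one _
    _ < ε := hN n hn

lemma not_UA_of_eq (hp : p ≠ ∞) {l : ℂ} (hl : ‖l‖ = 1)
    {Bl : lp (fun _ : ℕ => ℂ) p → lp (fun _ : ℕ => ℂ) p}
    (hBl : ∀ (x : lp (fun _ : ℕ => ℂ) p) (n : ℕ), (Bl x : ℕ → ℂ) n = l * x (n + 1)) :
    ¬ UA Bl := by
  rintro ⟨δ, hδ, H⟩
  obtain ⟨N, hN⟩ := H (δ / 2) (by positivity)
  set x : lp (fun _ : ℕ => ℂ) p := lp.single p N (((δ / 2 : ℝ) : ℂ)) with hxdef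
  have hxnorm : ‖x‖ = δ / 2 := by
    rw [hxdef]
    rw [lp.norm_single (pos_iff_ne_zero.2 (p_ne_zero (p := p))), Complex.norm_real, Real.norm_of_nonneg (by positivity)]
  have hxlt : ‖x‖ < δ := by rw [hxnorm]; linarith
  have hiter := hN N le_rfl x hxlt
  have hcoord : (Bl^[N] x : ℕ → ℂ) 0 = l ^ N * ((δ / 2 : ℝ) : ℂ) := by
    rw [iterate_coords hp hBl N x 0, Nat.zero_add, hxdef]
    congr 1
    exact lp.single_apply_self p N _
  have hge : δ / 2 ≤ ‖Bl^[N] x‖ := by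
    have h1 := lp.norm_apply_le_norm (p_ne_zero (p := p)) (Bl^[N] x) 0
    rw [hcoord, norm_mul, norm_pow, hl, one_pow, one_mul, Complex.norm_real,
      Real.norm_of_nonneg (by positivity)] at h1
    exact h1
  linarith

/-! ### Conjugacy transfer lemmas -/

lemma cont_at_zero {f : lp (fun _ : ℕ => ℂ) p → lp (fun _ : ℕ => ℂ) p}
    (hf : Continuous f) (hf0 : f 0 = 0) :
    ∀ ε > (0:ℝ), ∃ δ > (0:ℝ), ∀ x : lp (fun _ : ℕ => ℂ) p, ‖x‖ < δ → ‖f x‖ < ε := by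
  intro ε hε
  obtain ⟨δ, hδ, H⟩ := Metric.continuous_iff.1 hf 0 ε hε
  refine ⟨δ, hδ, fun x hx => ?_⟩
  have := H x (by rwa [dist_zero_right])
  rwa [hf0, dist_zero_right] at this

lemma conj_iterate {Bl Bw : lp (fun _ : ℕ => ℂ) p → lp (fun _ : ℕ => ℂ) p}
    (h : lp (fun _ : ℕ => ℂ) p ≃ₜ lp (fun _ : ℕ => ℂ) p)
    (hconj : ∀ x, h (Bl x) = Bw (h x)) (n : ℕ) (x : lp (fun _ : ℕ => ℂ) p) :
    h (Bl^[n] x) = Bw^[n] (h x) := by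
  induction n with
  | zero => simp
  | succ k ih =>
    rw [Function.iterate_succ_apply', Function.iterate_succ_apply', hconj, ih]

lemma gt_transfer (hp : p ≠ ∞) {l w : ℂ}
    {Bl Bw : lp (fun _ : ℕ => ℂ) p → lp (fun _ : ℕ => ℂ) p}
    (hBl : ∀ (x : lp (fun _ : ℕ => ℂ) p) (n : ℕ), (Bl x : ℕ → ℂ) n = l * x (n + 1))
    (hBw : ∀ (x : lp (fun _ : ℕ => ℂ) p) (n : ℕ), (Bw x : ℕ → ℂ) n = w * x (n + 1))
    (h : lp (fun _ : ℕ => ℂ) p ≃ₜ lp (fun _ : ℕ => ℂ) p)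
    (hconj : ∀ x, h (Bl x) = Bw (h x)) (hgt : 1 < ‖l‖) : 1 < ‖w‖ := by
  by_contra hc
  push_neg at hc
  obtain ⟨x, hfix, hx0⟩ := exists_fixed hp hgt hBl
  have h1 : Bw (h x) = h x := by rw [← hconj, hfix]
  have h2 : Bw (h 0) = h 0 := by rw [← hconj, Bl_zero hp hBl]
  have e1 : h x = 0 := fixed_unique hp hc hBw h1
  have e2 : h 0 = 0 := fixed_unique hp hc hBw h2
  exact hx0 (h.injective (e1.trans e2.symm))

lemma UA_transfer (hp : p ≠ ∞)
    {Bl Bw : lp (fun _ : ℕ => ℂ) p → lp (fun _ : ℕ => ℂ) p}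
    (h : lp (fun _ : ℕ => ℂ) p ≃ₜ lp (fun _ : ℕ => ℂ) p)
    (hconj : ∀ x, h (Bl x) = Bw (h x)) (h0 : h 0 = 0) (hUA : UA Bl) : UA Bw := by
  obtain ⟨δl, hδl, Hl⟩ := hUA
  have hsymm0 : h.symm 0 = 0 := by
    rw [← h0, h.symm_apply_apply]
    exact h0.symm
  obtain ⟨δw, hδw, Hδw⟩ := cont_at_zero h.symm.continuous hsymm0 δl hδl
  refine ⟨δw, hδw, fun ε hε => ?_⟩
  obtain ⟨ε₁, hε₁, Hε₁⟩ := cont_at_zero h.continuous h0 ε hε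
  obtain ⟨N, hN⟩ := Hl ε₁ hε₁
  refine ⟨N, fun n hn y hy => ?_⟩
  have hkey : Bw^[n] y = h (Bl^[n] (h.symm y)) := by
    rw [conj_iterate h hconj n (h.symm y), h.apply_symm_apply]
  rw [hkey]
  exact Hε₁ _ (hN n hn (h.symm y) (Hδw y hy))

lemma lt_transfer (hp : p ≠ ∞) {l w : ℂ}
    {Bl Bw : lp (fun _ : ℕ => ℂ) p → lp (fun _ : ℕ => ℂ) p}
    (hBl : ∀ (x : lp (fun _ : ℕ => ℂ) p) (n : ℕ), (Bl x : ℕ → ℂ) n = l * x (n + 1))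
    (hBw : ∀ (x : lp (fun _ : ℕ => ℂ) p) (n : ℕ), (Bw x : ℕ → ℂ) n = w * x (n + 1))
    (h : lp (fun _ : ℕ => ℂ) p ≃ₜ lp (fun _ : ℕ => ℂ) p)
    (hconj : ∀ x, h (Bl x) = Bw (h x)) (hlt : ‖l‖ < 1) (hwle : ‖w‖ ≤ 1) : ‖w‖ < 1 := by
  rcases lt_or_eq_of_le hwle with hw | hw
  · exact hw
  · exfalso
    have h0 : h 0 = 0 := by
      refine fixed_unique hp hwle hBw ?_
      rw [← hconj, Bl_zero hp hBl]
    have hUAw := UA_transfer hp h hconj h0 (UA_of_lt hp hlt hBl)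
    exact not_UA_of_eq hp hw hBw hUAw

end SC

/-- The sign-type function `χ` from the paper. -/
noncomputable def chi (t : ℝ) : ℝ :=
  if t > 1 then 1 else if t = 1 then 0 else -1

namespace SC

lemma chi_of_gt {t : ℝ} (h : 1 < t) : chi t = 1 := if_pos h

lemma chi_of_eq {t : ℝ} (h : t = 1) : chi t = 0 := by
  unfold chi
  rw [if_neg (by rw [h]; exact lt_irrefl 1), if_pos h]

lemma chi_of_lt {t : ℝ} (h : t < 1) : chi t = -1 := by
  unfold chi
  rw [if_neg (by linarith), if_neg (by linarith)]

/-- final theorem, stated inside the namespace. -/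
theorem main (p : ℝ≥0∞) [Fact (1 ≤ p)] (hp : p ≠ ∞)
    (l w : ℂ) (hl : l ≠ 0) (hw : w ≠ 0)
    (Bl Bw : lp (fun _ : ℕ => ℂ) p → lp (fun _ : ℕ => ℂ) p)
    (hBl : ∀ (x : lp (fun _ : ℕ => ℂ) p) (n : ℕ), (Bl x : ℕ → ℂ) n = l * x (n + 1))
    (hBw : ∀ (x : lp (fun _ : ℕ => ℂ) p) (n : ℕ), (Bw x : ℕ → ℂ) n = w * x (n + 1)) :
    (∃ h : lp (fun _ : ℕ => ℂ) p ≃ₜ lp (fun _ : ℕ => ℂ) p,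
        ∀ x, h (Bl x) = Bw (h x)) ↔ chi ‖l‖ = chi ‖w‖ := by
  have hlpos : (0:ℝ) < ‖l‖ := norm_pos_iff.2 hl
  have hwpos : (0:ℝ) < ‖w‖ := norm_pos_iff.2 hw
  constructor
  · rintro ⟨h, hconj⟩
    have hsymm : ∀ y, h.symm (Bw y) = Bl (h.symm y) := by
      intro y
      apply h.injective
      rw [h.apply_symm_apply, hconj, h.apply_symm_apply]
    have hgt_iff : 1 < ‖l‖ ↔ 1 < ‖w‖ :=
      ⟨gt_transfer hp hBl hBw h hconj, gt_transfer hp hBw hBl h.symm hsymm⟩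
    rcases lt_trichotomy ‖l‖ 1 with hlt | heq | hgt
    · have hwle : ‖w‖ ≤ 1 := by
        by_contra hc
        push_neg at hc
        exact absurd (hgt_iff.2 hc) (by linarith)
      have hwlt : ‖w‖ < 1 := lt_transfer hp hBl hBw h hconj hlt hwle
      rw [chi_of_lt hlt, chi_of_lt hwlt]
    · have hwle : ‖w‖ ≤ 1 := by
        by_contra hc
        push_neg at hc
        have := hgt_iff.2 hc
        linarith [heq.le]
      have hweq : ‖w‖ = 1 := by
        rcases lt_or_eq_of_le hwle with hwlt | hweq
        · exfalso
          have hlle : ‖l‖ ≤ 1 := le_of_eq heq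
          have := lt_transfer hp hBw hBl h.symm hsymm hwlt hlle
          linarith
        · exact hweq
      rw [chi_of_eq heq, chi_of_eq hweq]
    · rw [chi_of_gt hgt, chi_of_gt (hgt_iff.1 hgt)]
  · intro hchi
    rcases lt_trichotomy ‖l‖ 1 with hlt | heq | hgt
    · have hwlt : ‖w‖ < 1 := by
        rcases lt_trichotomy ‖w‖ 1 with h' | h' | h'
        · exact h'
        · rw [chi_of_lt hlt, chi_of_eq h'] at hchi; norm_num at hchi
        · rw [chi_of_lt hlt, chi_of_gt h'] at hchi; norm_num at hchi
      have hllog : Real.log ‖l‖ < 0 := Real.log_neg hlpos hlt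
      have hwlog : Real.log ‖w‖ < 0 := Real.log_neg hwpos hwlt
      have hα : (0:ℝ) < Real.log ‖w‖ / Real.log ‖l‖ := div_pos_of_neg_of_neg hwlog hllog
      refine exists_conj hp hl hw hα ?_ hBl hBw
      rw [Real.rpow_def_of_pos hlpos, mul_comm, div_mul_cancel₀ _ hllog.ne, Real.exp_log hwpos]
    · have hweq : ‖w‖ = 1 := by
        rcases lt_trichotomy ‖w‖ 1 with h' | h' | h'
        · rw [chi_of_eq heq, chi_of_lt h'] at hchi; norm_num at hchi
        · exact h'
        · rw [chi_of_eq heq, chi_of_gt h'] at hchi; norm_num at hchi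
      refine exists_conj hp hl hw one_pos ?_ hBl hBw
      rw [Real.rpow_one, heq, hweq]
    · have hwgt : 1 < ‖w‖ := by
        rcases lt_trichotomy ‖w‖ 1 with h' | h' | h'
        · rw [chi_of_gt hgt, chi_of_lt h'] at hchi; norm_num at hchi
        · rw [chi_of_gt hgt, chi_of_eq h'] at hchi; norm_num at hchi
        · exact h'
      have hllog : (0:ℝ) < Real.log ‖l‖ := Real.log_pos hgt
      have hwlog : (0:ℝ) < Real.log ‖w‖ := Real.log_pos hwgt
      have hα : (0:ℝ) < Real.log ‖w‖ / Real.log ‖l‖ := div_pos hwlog hllog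
      refine exists_conj hp hl hw hα ?_ hBl hBw
      rw [Real.rpow_def_of_pos hlpos, mul_comm, div_mul_cancel₀ _ hllog.ne', Real.exp_log hwpos]

end SC

/-- `λB_p` and `ωB_p` are topologically conjugate iff `χ(|λ|) = χ(|ω|)`. -/
theorem shifts_conjugate_iff_chi_eq (p : ℝ≥0∞) [Fact (1 ≤ p)] (hp : p ≠ ∞)
    (l w : ℂ) (hl : l ≠ 0) (hw : w ≠ 0)
    (Bl Bw : lp (fun _ : ℕ => ℂ) p → lp (fun _ : ℕ => ℂ) p)
    (hBl : ∀ (x : lp (fun _ : ℕ => ℂ) p) (n : ℕ), (Bl x : ℕ → ℂ) n = l * x (n + 1))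
    (hBw : ∀ (x : lp (fun _ : ℕ => ℂ) p) (n : ℕ), (Bw x : ℕ → ℂ) n = w * x (n + 1)) :
    (∃ h : lp (fun _ : ℕ => ℂ) p ≃ₜ lp (fun _ : ℕ => ℂ) p,
        ∀ x, h (Bl x) = Bw (h x)) ↔ chi ‖l‖ = chi ‖w‖ := by
  exact SC.main p hp l w hl hw Bl Bw hBl hBw
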